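/- For every integer n ≥ 2, every real r ≥ 1, and every real t with 0 < t < b_A(n), one has scal_A(n,t)/(n(n+1)−1) < (1/t² − 1)·r. (Hence scal(g_t)/(m−1) never equals an eigenvalue of the form λ^{0,j}(t) = (1/t²−1)φ_j with φ_j ≥ 1 for t in this range.) -/

import Mathlib

set_option maxHeartbeats 1000000


/-- Scalar curvature of the canonical variation `g_t` of the normal homogeneous
metric on the full flag manifold `SU(n+1)/Tⁿ`. -/
noncomputable def scalA (n : ℕ) (t : ℝ) : ℝ :=
  (-2 * n + n ^ 2 * (n + 1) + 4 * n * (n + 1) * t ^ 2 + n * (1 - n) * t ^ 4) /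
    (4 * (n + 1) * t ^ 2)

/-- The first degeneracy instant of `g_t` on `SU(n+1)/Tⁿ`. -/
noncomputable def bA (n : ℕ) : ℝ :=
  Real.sqrt (Real.sqrt ((4 * n ^ 4 + 17 * n ^ 3 + 26 * n ^ 2 + 16 * n + 4) / n ^ 2)
    - 2 * (n ^ 2 + 2 * n + 1) / n)

/-- For `n ≥ 2`, `r ≥ 1` and `0 < t < b_A(n)`,
`scal_A(n,t)/(n(n+1)-1) < (1/t² - 1)·r`; hence `scal(g_t)/(m-1)` never equals
an eigenvalue `λ^{0,j}(t) = (1/t²-1)φ_j` with `φ_j ≥ 1` in this range. -/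
theorem scalA_div_lt_vertical (n : ℕ) (hn : 2 ≤ n) (r : ℝ) (hr : 1 ≤ r)
    (t : ℝ) (ht0 : 0 < t) (htb : t < bA n) :
    scalA n t / (n * (n + 1) - 1) < (1 / t ^ 2 - 1) * r := by
  have hN : (2:ℝ) ≤ (n:ℝ) := by exact_mod_cast hn
  set N : ℝ := (n:ℝ) with hNdef
  have hNpos : (0:ℝ) < N := by linarith
  have hs : 0 < t ^ 2 := by positivity
  -- from t < bA n, get t^2 < X
  have hX : t ^ 2 < Real.sqrt (4 * N ^ 4 + 17 * N ^ 3 + 26 * N ^ 2 + 16 * N + 4) / N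
      - 2 * (N ^ 2 + 2 * N + 1) / N := by
    have := (Real.lt_sqrt ht0.le).mp htb
    simpa [bA] using this
  have hE0 : (0:ℝ) ≤ 4 * N ^ 4 + 17 * N ^ 3 + 26 * N ^ 2 + 16 * N + 4 := by positivity
  -- N t^2 + 2(N+1)^2 < sqrt E
  have h1 : N * t ^ 2 + 2 * (N + 1) ^ 2 < Real.sqrt (4 * N ^ 4 + 17 * N ^ 3 + 26 * N ^ 2 + 16 * N + 4) := by
    have h2 : t ^ 2 + 2 * (N ^ 2 + 2 * N + 1) / N
        < Real.sqrt (4 * N ^ 4 + 17 * N ^ 3 + 26 * N ^ 2 + 16 * N + 4) / N := by linarith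
    have h3 := mul_lt_mul_of_pos_left h2 hNpos
    field_simp at h3
    rw [show N * (N * (N * (N * 4 + 17) + 26) + 16) + 4 = 4 * N ^ 4 + 17 * N ^ 3 + 26 * N ^ 2 + 16 * N + 4 by ring] at h3
    nlinarith [h3]
  have hsq := Real.sq_sqrt hE0
  have h4 : (N * t ^ 2 + 2 * (N + 1) ^ 2) ^ 2
      < 4 * N ^ 4 + 17 * N ^ 3 + 26 * N ^ 2 + 16 * N + 4 := by
    have hpos : (0:ℝ) ≤ N * t ^ 2 + 2 * (N + 1) ^ 2 := by positivity
    nlinarith [h1, hsq, hpos]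
  -- key inequality
  have key : N * (t ^ 2) ^ 2 + 4 * (N + 1) ^ 2 * t ^ 2 < N * (N + 2) := by
    nlinarith [h4, hNpos, mul_pos hNpos hs]
  have hs14 : t ^ 2 < 1 / 4 := by
    nlinarith [key, mul_pos hNpos (mul_pos hs hs)]
  -- main inequality with r = 1
  have hden : (0:ℝ) < N * (N + 1) - 1 := by nlinarith
  have hden2 : (0:ℝ) < 4 * (N + 1) * t ^ 2 := by positivity
  have main : scalA n t / (N * (N + 1) - 1) < 1 / t ^ 2 - 1 := by
    rw [div_lt_iff₀ hden, scalA, div_lt_iff₀ hden2]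
    have heq : (1 / t ^ 2 - 1) * (N * (N + 1) - 1) * (4 * (N + 1) * t ^ 2)
        = (1 - t ^ 2) * ((N * (N + 1) - 1) * (4 * (N + 1))) := by
      field_simp
    rw [heq]
    have hfac : (0:ℝ) < 4 * (N + 1) * (N ^ 2 + 2 * N - 1) - N * (N - 1) * (t ^ 2 + 1 / 4) := by
      nlinarith [hs14, hs]
    nlinarith [mul_pos (show (0:ℝ) < 1 / 4 - t ^ 2 by linarith) hfac, hN]
  have hpos1 : (0:ℝ) < 1 / t ^ 2 - 1 := by
    have h5 : t ^ 2 < 1 := by linarith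
    have h6 : 1 < 1 / t ^ 2 := (one_lt_div hs).mpr h5
    linarith
  calc scalA n t / (N * (N + 1) - 1) < 1 / t ^ 2 - 1 := main
    _ = (1 / t ^ 2 - 1) * 1 := by ring
    _ ≤ (1 / t ^ 2 - 1) * r := by nlinarith [hpos1, hr]
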